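/- Let M be a compact metric space with Borel probability measure m, f : M → M Borel measurable, and B ⊆ M Borel with B ⊆ f⁻¹(B) and m(B) > 0. Then for m-almost every x ∈ B, the limit set L*(x) of empirical measures is contained in the set O_{f|B} of SRB-like measures for f|_B. -/

import Mathlib

open MeasureTheory Filter Metric Set
open scoped Classical ENNReal Topology NNReal

/-- Frequency of visits, up to time `n - 1`, of the orbit of `x` to the
`ε`-neighborhood of `K`. -/
noncomputable def visitFreq {M : Type*} [MetricSpace M] (f : M → M) (K : Set M) (ε : ℝ)
    (x : M) (n : ℕ) : ℝ :=
  (((Finset.range n).filter (fun j => infDist (f^[j] x) K < ε)).card : ℝ) / n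

/-- Basin of statistical attraction of `K`. -/
def statBasin {M : Type*} [MetricSpace M] (f : M → M) (K : Set M) : Set M :=
  {x | ∀ ε > 0, Tendsto (fun n => visitFreq f K ε x n) atTop (𝓝 1)}

/-- The empirical probability measure `ν_{n+1}(x) = (1/(n+1)) ∑_{j=0}^{n} δ_{f^j(x)}`. -/
noncomputable def emp {M : Type*} [MeasurableSpace M] (f : M → M) (x : M) (n : ℕ) :
    ProbabilityMeasure M :=
  ⟨((n + 1 : ℝ≥0∞))⁻¹ • ∑ j ∈ Finset.range (n + 1), Measure.dirac (f^[j] x), by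
    constructor
    simp [Measure.smul_apply, Measure.finset_sum_apply]
    exact ENNReal.inv_mul_cancel (by simp) (by simp)⟩

/-- The limit set `L*(x)`: all weak* limits of convergent subsequences of `ν_n(x)`. -/
def Lstar {M : Type*} [MetricSpace M] [MeasurableSpace M] [OpensMeasurableSpace M]
    (f : M → M) (x : M) : Set (ProbabilityMeasure M) :=
  {μ | ∃ φ : ℕ → ℕ, StrictMono φ ∧ Tendsto (fun i => emp f x (φ i)) atTop (𝓝 μ)}

/-- `d` is a metric on the space of Borel probability measures inducing the weak* topology. -/
def IsWeakStarMetric {M : Type*} [MetricSpace M] [MeasurableSpace M] [OpensMeasurableSpace M]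
    (d : ProbabilityMeasure M → ProbabilityMeasure M → ℝ) : Prop :=
  (∀ μ ν, 0 ≤ d μ ν) ∧ (∀ μ ν, d μ ν = d ν μ) ∧ (∀ μ ν, d μ ν = 0 ↔ μ = ν) ∧
    (∀ μ ν ρ, d μ ρ ≤ d μ ν + d ν ρ) ∧
    (∀ (μ : ProbabilityMeasure M) (s : Set (ProbabilityMeasure M)),
      s ∈ 𝓝 μ ↔ ∃ ε > 0, {ν | d ν μ < ε} ⊆ s)

/-- `μ` is SRB-like (physical-like) for `f` restricted to `B`: for every `ε > 0` the basin of
`ε`-weak statistical attraction `{x ∈ B : dist*(L*(x), μ) < ε}` has positive `m`-measure. -/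
def SRBlike {M : Type*} [MetricSpace M] [MeasurableSpace M] [OpensMeasurableSpace M]
    (m : Measure M) (f : M → M) (B : Set M)
    (d : ProbabilityMeasure M → ProbabilityMeasure M → ℝ) (μ : ProbabilityMeasure M) : Prop :=
  ∀ ε > 0, 0 < m {x | x ∈ B ∧ ∃ ν ∈ Lstar f x, d ν μ < ε}


open BoundedContinuousFunction in
/-- For a compact metric space `M`, the space of Borel probability measures with the weak*
topology is second countable. -/
theorem probabilityMeasure_secondCountable {M : Type*} [MetricSpace M] [CompactSpace M]
    [MeasurableSpace M] [OpensMeasurableSpace M] :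
    SecondCountableTopology (ProbabilityMeasure M) := by
  haveI : SecondCountableTopology (M →ᵇ ℝ≥0) := by
    have h := ContinuousMap.isUniformEmbedding_equivBoundedOfCompact M ℝ≥0
    have e := Equiv.toHomeomorphOfIsInducing (ContinuousMap.equivBoundedOfCompact M ℝ≥0)
      h.isEmbedding.toIsInducing
    exact e.symm.isInducing.secondCountableTopology
  haveI : Nonempty (M →ᵇ ℝ≥0) := ⟨0⟩
  obtain ⟨g, hg⟩ := TopologicalSpace.exists_dense_seq (M →ᵇ ℝ≥0)
  set Ψ : ProbabilityMeasure M → (ℕ → ℝ≥0) :=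
    fun μ k => μ.toFiniteMeasure.testAgainstNN (g k) with hΨ
  have hcont : Continuous Ψ := continuous_pi fun k =>
    (FiniteMeasure.continuous_testAgainstNN_eval (g k)).comp
      ProbabilityMeasure.toFiniteMeasure_continuous
  have hInd : Topology.IsInducing Ψ := by
    rw [Topology.isInducing_iff_nhds]
    intro μ
    refine le_antisymm ((hcont.tendsto μ).le_comap) ?_
    have key : Tendsto id (Filter.comap Ψ (𝓝 (Ψ μ))) (𝓝 μ) := by
      rw [ProbabilityMeasure.tendsto_nhds_iff_toFiniteMeasure_tendsto_nhds,
        FiniteMeasure.tendsto_iff_forall_testAgainstNN_tendsto]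
      intro f
      rw [Metric.tendsto_nhds]
      intro ε hε
      obtain ⟨k, hk⟩ := Metric.denseRange_iff.mp hg f (ε / 3) (by linarith)
      have hk' : Tendsto (fun ν => Ψ ν k) (Filter.comap Ψ (𝓝 (Ψ μ))) (𝓝 (Ψ μ k)) :=
        ((continuous_apply k).tendsto (Ψ μ)).comp tendsto_comap
      filter_upwards [Metric.tendsto_nhds.mp hk' (ε / 3) (by linarith)] with ν hν
      have l1 : dist (ν.toFiniteMeasure.testAgainstNN f)
          (ν.toFiniteMeasure.testAgainstNN (g k)) ≤ dist f (g k) := by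
        simpa using ν.testAgainstNN_lipschitz.dist_le_mul f (g k)
      have l2 : dist (μ.toFiniteMeasure.testAgainstNN (g k))
          (μ.toFiniteMeasure.testAgainstNN f) ≤ dist f (g k) := by
        rw [dist_comm]
        simpa using μ.testAgainstNN_lipschitz.dist_le_mul f (g k)
      have tri := dist_triangle4 (ν.toFiniteMeasure.testAgainstNN f)
        (ν.toFiniteMeasure.testAgainstNN (g k)) (μ.toFiniteMeasure.testAgainstNN (g k))
        (μ.toFiniteMeasure.testAgainstNN f)
      have hν' : dist (ν.toFiniteMeasure.testAgainstNN (g k))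
          (μ.toFiniteMeasure.testAgainstNN (g k)) < ε / 3 := hν
      simp only [Function.comp, id_eq]
      calc dist (ν.toFiniteMeasure.testAgainstNN f) (μ.toFiniteMeasure.testAgainstNN f)
          ≤ _ + _ + _ := tri
        _ < ε := by linarith
    exact key
  exact hInd.secondCountableTopology

/-- for `m`-almost every `x ∈ B`, the limit set `L*(x)` is contained in the
set of SRB-like measures for `f|_B`. -/
theorem Lstar_subset_srbLike_ae {M : Type*} [MetricSpace M] [CompactSpace M]
    [MeasurableSpace M] [BorelSpace M] (m : Measure M) [IsProbabilityMeasure m]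
    (f : M → M) (hf : Measurable f) (B : Set M) (hB : MeasurableSet B)
    (hBinv : B ⊆ f ⁻¹' B) (hBm : 0 < m B)
    (d : ProbabilityMeasure M → ProbabilityMeasure M → ℝ) (hd : IsWeakStarMetric d) :
    ∀ᵐ x ∂m, x ∈ B → Lstar f x ⊆ {μ : ProbabilityMeasure M | SRBlike m f B d μ} := by
  haveI : SecondCountableTopology (ProbabilityMeasure M) := probabilityMeasure_secondCountable
  obtain ⟨dpos, dsymm, deq, dtri, dnhds⟩ := hd
  set N : Set (ProbabilityMeasure M) := {μ | ¬ SRBlike m f B d μ} with hN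
  have hbasin : ∀ μ ∈ N, ∃ ε > 0, m {x | x ∈ B ∧ ∃ ν ∈ Lstar f x, d ν μ < ε} = 0 := by
    intro μ hμ
    have hμ' : ¬ SRBlike m f B d μ := hμ
    rw [SRBlike] at hμ'
    push_neg at hμ'
    obtain ⟨ε, εpos, hle⟩ := hμ'
    exact ⟨ε, εpos, le_antisymm hle zero_le⟩
  choose! ε εpos hnull using hbasin
  have hcov : ∀ μ ∈ N, {ν | d ν μ < ε μ} ∈ 𝓝[N] μ := fun μ hμ =>
    nhdsWithin_le_nhds ((dnhds μ _).mpr ⟨ε μ, εpos μ hμ, subset_rfl⟩)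
  obtain ⟨T, hTN, hTc, hTcov⟩ := TopologicalSpace.countable_cover_nhdsWithin hcov
  have hE : m (⋃ μ ∈ T, {x | x ∈ B ∧ ∃ ν ∈ Lstar f x, d ν μ < ε μ}) = 0 :=
    (measure_biUnion_null_iff hTc).mpr fun μ hμ => hnull μ (hTN hμ)
  filter_upwards [measure_eq_zero_iff_ae_notMem.mp hE] with x hx hxB ν hν
  by_contra hbad
  have hνN : ν ∈ N := hbad
  obtain ⟨μ, hμT, hdν⟩ := mem_iUnion₂.mp (hTcov hνN)
  exact hx (mem_iUnion₂.mpr ⟨μ, hμT, hxB, ν, hν, hdν⟩)
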